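/- Let p be a prime and let G be a finitely generated p-group. Suppose there exist integers k ≥ 1 and ℓ ≥ 1 and a normal subgroup N of G such that N ≤ Φ_p(G), the index (G : N) equals p^ℓ, and N is isomorphic as a group to the direct product of k copies of G. Let d denote the maximum of d(H) over all subgroups H of the finite group G/N, and set C = (k−1)·d(G) + d. Then for every m ∈ ℕ, every subgroup U ≤ G of index p^m satisfies d(U) ≤ C·m + d(G). -/

import Mathlib

open Filter Topology
open scoped commutatorElement

/-- `ngen G` is the minimal number of generators `d(G)` of a group `G`. -/
noncomputable def ngen (G : Type*) [Group G] : ℕ :=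
  sInf {n | ∃ S : Finset G, S.card = n ∧ Subgroup.closure (S : Set G) = ⊤}

/-- `phiP p G` is `Φ_p(G)`, the subgroup of `G` generated by all commutators
and all `p`-th powers. -/
def phiP (p : ℕ) (G : Type*) [Group G] : Subgroup G :=
  Subgroup.normalClosure ({x | ∃ a b : G, x = ⁅a, b⁆} ∪ {x | ∃ g : G, x = g ^ p})

instance phiP_normal (p : ℕ) (G : Type*) [Group G] : (phiP p G).Normal :=
  Subgroup.normalClosure_normal

/-- `dp p G = d_p(G)`, the minimal number of generators of `G/Φ_p(G)`. -/
noncomputable def dp (p : ℕ) (G : Type*) [Group G] : ℕ := ngen (G ⧸ phiP p G)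

/-- `subCount G n = s_n(G)`, the number of (finite-index) subgroups of `G`
of index at most `n`. -/
noncomputable def subCount (G : Type*) [Group G] (n : ℕ) : ℕ :=
  Nat.card {H : Subgroup G // 0 < H.index ∧ H.index ≤ n}

/-- `dpMax p G m = d_p(m)`, the maximum of `d_p(U)` over subgroups `U ≤ G`
of index exactly `p^m`. -/
noncomputable def dpMax (p : ℕ) (G : Type*) [Group G] (m : ℕ) : ℕ :=
  sSup {d | ∃ U : Subgroup G, U.index = p ^ m ∧ d = dp p ↥U}

section NgenBasic

variable {X Y Z : Type*} [Group X] [Group Y] [Group Z]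

lemma ngen_le {S : Finset X} (h : Subgroup.closure (S : Set X) = ⊤) : ngen X ≤ S.card :=
  Nat.sInf_le ⟨S, rfl, h⟩

lemma exists_gen (X : Type*) [Group X] [Group.FG X] :
    ∃ S : Finset X, S.card = ngen X ∧ Subgroup.closure (S : Set X) = ⊤ := by
  have hne : {n | ∃ S : Finset X, S.card = n ∧ Subgroup.closure (S : Set X) = ⊤}.Nonempty := by
    obtain ⟨n, S, hc, hS⟩ := Group.fg_iff'.mp ‹Group.FG X›
    exact ⟨n, S, hc, hS⟩
  obtain ⟨S, hc, hS⟩ := Nat.sInf_mem hne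
  exact ⟨S, hc, hS⟩

lemma mem_ngen_set_of_equiv (e : X ≃* Y) {n : ℕ}
    (h : ∃ S : Finset X, S.card = n ∧ Subgroup.closure (S : Set X) = ⊤) :
    ∃ S : Finset Y, S.card = n ∧ Subgroup.closure (S : Set Y) = ⊤ := by
  classical
  obtain ⟨S, hc, hS⟩ := h
  refine ⟨S.image e, by rw [Finset.card_image_of_injective _ e.injective, hc], ?_⟩
  rw [Finset.coe_image, show ⇑e = ⇑e.toMonoidHom from rfl, ← MonoidHom.map_closure, hS]
  exact Subgroup.map_top_of_surjective _ e.surjective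

lemma ngen_eq_of_mulEquiv (e : X ≃* Y) : ngen X = ngen Y := by
  unfold ngen
  congr 1
  ext n
  exact ⟨mem_ngen_set_of_equiv e, mem_ngen_set_of_equiv e.symm⟩

lemma ngen_le_of_exact (f : X →* Y) (hf : Function.Surjective f) (g : Z →* X)
    (hr : g.range = f.ker) [Group.FG Z] [Group.FG Y] :
    ngen X ≤ ngen Z + ngen Y := by
  classical
  obtain ⟨S, hcS, hS⟩ := exists_gen Z
  obtain ⟨T, hcT, hT⟩ := exists_gen Y
  set T' : Finset X := T.image (Function.surjInv hf) with hT'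
  set S' : Finset X := S.image g with hS'
  have key : Subgroup.closure ((S' ∪ T' : Finset X) : Set X) = ⊤ := by
    set H := Subgroup.closure ((S' ∪ T' : Finset X) : Set X) with hH
    have hker : f.ker ≤ H := by
      rw [← hr, MonoidHom.range_eq_map, ← hS, MonoidHom.map_closure]
      refine Subgroup.closure_le H |>.mpr ?_
      intro x hx
      apply Subgroup.subset_closure
      obtain ⟨z, hz, rfl⟩ := hx
      simp only [Finset.coe_union, Set.mem_union, hS', Finset.coe_image]
      exact Or.inl ⟨z, hz, rfl⟩
    have hmap : Subgroup.map f H = ⊤ := by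
      rw [eq_top_iff, ← hT]
      refine Subgroup.closure_le _ |>.mpr ?_
      intro t ht
      refine ⟨Function.surjInv hf t, ?_, Function.surjInv_eq hf t⟩
      apply Subgroup.subset_closure
      simp only [Finset.coe_union, Set.mem_union, hT', Finset.coe_image]
      exact Or.inr ⟨t, ht, rfl⟩
    calc H = H ⊔ f.ker := (sup_eq_left.mpr hker).symm
      _ = Subgroup.comap f (Subgroup.map f H) := (Subgroup.comap_map_eq f H).symm
      _ = Subgroup.comap f ⊤ := by rw [hmap]
      _ = ⊤ := Subgroup.comap_top f
  calc ngen X ≤ (S' ∪ T').card := ngen_le key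
    _ ≤ S'.card + T'.card := Finset.card_union_le _ _
    _ ≤ S.card + T.card := Nat.add_le_add Finset.card_image_le Finset.card_image_le
    _ = ngen Z + ngen Y := by rw [hcS, hcT]

lemma ngen_le_card (X : Type*) [Group X] [Finite X] : ngen X ≤ Nat.card X := by
  classical
  have := Fintype.ofFinite X
  have h : Subgroup.closure ((Finset.univ : Finset X) : Set X) = ⊤ := by
    rw [Finset.coe_univ]
    exact Subgroup.closure_univ
  calc ngen X ≤ (Finset.univ : Finset X).card := ngen_le h
    _ = Nat.card X := by rw [Finset.card_univ, Nat.card_eq_fintype_card]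

lemma fg_prod (A B : Type*) [Group A] [Group B] [Group.FG A] [Group.FG B] :
    Group.FG (A × B) := by
  obtain ⟨S, -, hS⟩ := exists_gen A
  obtain ⟨T, -, hT⟩ := exists_gen B
  rw [Group.fg_iff]
  set s : Set (A × B) := ((MonoidHom.inl A B) '' S) ∪ ((MonoidHom.inr A B) '' T) with hs
  refine ⟨s, ?_, ?_⟩
  · rw [eq_top_iff]
    rintro ⟨a, b⟩ -
    have h1 : (MonoidHom.inl A B).range ≤ Subgroup.closure s := by
      rw [MonoidHom.range_eq_map, ← hS, MonoidHom.map_closure]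
      exact Subgroup.closure_mono Set.subset_union_left
    have h2 : (MonoidHom.inr A B).range ≤ Subgroup.closure s := by
      rw [MonoidHom.range_eq_map, ← hT, MonoidHom.map_closure]
      exact Subgroup.closure_mono Set.subset_union_right
    have : (a, b) = (MonoidHom.inl A B a) * (MonoidHom.inr A B b) := by simp
    rw [this]
    exact mul_mem (h1 ⟨a, rfl⟩) (h2 ⟨b, rfl⟩)
  · exact Set.Finite.union (S.finite_toSet.image _) (T.finite_toSet.image _)

end NgenBasic

section SecondIso

variable {X : Type*} [Group X]

lemma relindex_sup_normal (W K : Subgroup X) [K.Normal] :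
    W.relIndex (W ⊔ K) = W.relIndex K := by
  have hKT : K ≤ W ⊔ K := le_sup_right
  have hsurj : Function.Surjective (Subgroup.quotientSubgroupOfEmbeddingOfLE W hKT) := by
    intro q
    induction q using QuotientGroup.induction_on with
    | H t =>
      have ht : (t : X) ∈ (↑(K ⊔ W) : Set X) := by
        rw [sup_comm]
        exact t.2
      rw [Subgroup.normal_mul K W] at ht
      obtain ⟨k, hk, w, hw, hkw⟩ := ht
      refine ⟨QuotientGroup.mk ⟨k, hk⟩, ?_⟩
      rw [Subgroup.quotientSubgroupOfEmbeddingOfLE_apply_mk]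
      rw [QuotientGroup.eq]
      rw [Subgroup.mem_subgroupOf]
      have hcoe : ((((Subgroup.inclusion hKT) ⟨k, hk⟩)⁻¹ * t : ↥(W ⊔ K)) : X) = k⁻¹ * (t : X) := rfl
      rw [hcoe, ← show k * w = (t : X) from hkw, inv_mul_cancel_left]
      exact hw
  have hbij : Function.Bijective (Subgroup.quotientSubgroupOfEmbeddingOfLE W hKT) :=
    ⟨(Subgroup.quotientSubgroupOfEmbeddingOfLE W hKT).injective, hsurj⟩
  have := Nat.card_congr (Equiv.ofBijective _ hbij)
  unfold Subgroup.relIndex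
  rw [Subgroup.index_eq_card, Subgroup.index_eq_card]
  exact this.symm

end SecondIso

section Frattini

variable {X Y : Type*} [Group X] [Group Y]

lemma map_phiP_le (p : ℕ) (f : X →* Y) (hf : Function.Surjective f) :
    (phiP p X).map f ≤ phiP p Y := by
  unfold phiP
  rw [Subgroup.map_normalClosure _ _ hf]
  apply Subgroup.normalClosure_mono
  rintro y ⟨x, hx, rfl⟩
  rcases hx with ⟨a, b, rfl⟩ | ⟨g, rfl⟩
  · exact Or.inl ⟨f a, f b, by simp [commutatorElement_def]⟩
  · exact Or.inr ⟨f g, by simp⟩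

lemma phiP_le_coatom {p : ℕ} (hp : p.Prime) [Finite X] (hX : IsPGroup p X)
    {M : Subgroup X} (hM : IsCoatom M) : phiP p X ≤ M := by
  haveI : Fact p.Prime := ⟨hp⟩
  haveI : M.Normal := by
    haveI h1 : Group.IsNilpotent X := hX.isNilpotent
    have h2 : NormalizerCondition X := normalizerCondition_of_isNilpotent
    exact Subgroup.NormalizerCondition.normal_of_coatom M h2 hM
  -- every subgroup of X ⧸ M is ⊥ or ⊤
  have htriv : ∀ Q : Subgroup (X ⧸ M), Q = ⊥ ∨ Q = ⊤ := by
    intro Q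
    have hcm : M ≤ Q.comap (QuotientGroup.mk' M) := by
      intro x hx
      simp only [Subgroup.mem_comap]
      have : (QuotientGroup.mk' M) x = 1 := by
        rw [← MonoidHom.mem_ker, QuotientGroup.ker_mk']
        exact hx
      rw [this]; exact Q.one_mem
    rcases hcm.lt_or_eq with h | h
    · right
      have := hM.2 _ h
      have h2 : Q.comap (QuotientGroup.mk' M) = ⊤ := this
      have := Subgroup.map_comap_eq_self_of_surjective (QuotientGroup.mk'_surjective M) Q
      rw [← this, h2]
      exact Subgroup.map_top_of_surjective _ (QuotientGroup.mk'_surjective M)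
    · left
      have := Subgroup.map_comap_eq_self_of_surjective (QuotientGroup.mk'_surjective M) Q
      rw [← this, ← h]
      rw [eq_bot_iff]
      rintro y ⟨x, hx, rfl⟩
      have : (QuotientGroup.mk' M) x = 1 := by
        rw [← MonoidHom.mem_ker, QuotientGroup.ker_mk']
        exact hx
      simp [this]
  -- X ⧸ M is abelian
  have hntriv : Nontrivial (X ⧸ M) := by
    obtain ⟨x, hx⟩ : ∃ x, x ∉ M := by
      by_contra h
      push_neg at h
      exact hM.1 (eq_top_iff.mpr fun y _ => h y)
    refine ⟨⟨QuotientGroup.mk x, 1, ?_⟩⟩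
    simpa [QuotientGroup.eq_one_iff] using hx
  have habel : ∀ a b : X ⧸ M, a * b = b * a := by
    intro a b
    obtain ⟨x, hx1⟩ := exists_ne (1 : X ⧸ M)
    have hcx : Subgroup.zpowers x = ⊤ := by
      rcases htriv (Subgroup.zpowers x) with h | h
      · exfalso; apply hx1
        have : x ∈ Subgroup.zpowers x := Subgroup.mem_zpowers x
        rw [h] at this
        simpa using this
      · exact h
    have ha : a ∈ Subgroup.zpowers x := by rw [hcx]; trivial
    have hb : b ∈ Subgroup.zpowers x := by rw [hcx]; trivial
    obtain ⟨s, rfl⟩ := ha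
    obtain ⟨t, rfl⟩ := hb
    exact (zpow_mul_comm x s t)
  -- every p-th power is trivial in X ⧸ M
  have hpow : ∀ q : X ⧸ M, q ^ p = 1 := by
    intro q
    by_contra hq
    have hq1 : q ≠ 1 := by
      intro h; apply hq; rw [h]; simp
    have h1 : Subgroup.zpowers (q ^ p) = ⊤ := by
      rcases htriv (Subgroup.zpowers (q ^ p)) with h | h
      · exfalso; apply hq
        have : q ^ p ∈ Subgroup.zpowers (q ^ p) := Subgroup.mem_zpowers _
        rw [h] at this; simpa using this
      · exact h
    have hXq : IsPGroup p (X ⧸ M) := hX.to_quotient M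
    obtain ⟨a, ha⟩ := hXq q
    have hdvd : orderOf q ∣ p ^ a := orderOf_dvd_of_pow_eq_one ha
    obtain ⟨b, hb, hob⟩ := (Nat.dvd_prime_pow hp).mp hdvd
    have hb1 : 1 ≤ b := by
      rcases Nat.eq_zero_or_pos b with h | h
      · exfalso; apply hq1
        have : orderOf q = 1 := by rw [hob, h, pow_zero]
        exact orderOf_eq_one_iff.mp this
      · exact h
    have hgcd : Nat.gcd (orderOf q) p = p := by
      rw [hob]
      exact Nat.gcd_eq_right (dvd_pow_self p (by omega))
    have hopow : orderOf (q ^ p) = p ^ (b - 1) := by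
      rw [orderOf_pow, hgcd, hob, ← Nat.pow_div hb1 hp.pos, pow_one]
    have hcard : orderOf q ∣ p ^ (b - 1) := by
      rw [← hopow, ← Nat.card_zpowers (q ^ p)]
      have : orderOf q ∣ Nat.card (X ⧸ M) := orderOf_dvd_natCard q
      rw [← Nat.card_congr (Subgroup.topEquiv (G := X ⧸ M)).toEquiv, ← h1] at this
      exact this
    have := Nat.le_of_dvd (Nat.pow_pos hp.pos) hcard
    rw [hob] at this
    have h2 := Nat.pow_lt_pow_right hp.one_lt (show b - 1 < b by omega)
    omega
  -- conclude
  unfold phiP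
  refine Subgroup.normalClosure_le_normal ?_
  rintro x (⟨a, b, rfl⟩ | ⟨g, rfl⟩)
  · have : ((⁅a, b⁆ : X) : X ⧸ M) = 1 := by
      have : ((⁅a, b⁆ : X) : X ⧸ M) = ⁅(a : X ⧸ M), (b : X ⧸ M)⁆ := by
        simp [commutatorElement_def]
      rw [this]
      exact commutatorElement_eq_one_iff_mul_comm.mpr (habel _ _)
    exact (QuotientGroup.eq_one_iff _).mp this
  · have : ((g ^ p : X) : X ⧸ M) = 1 := by
      have h2 : ((g ^ p : X) : X ⧸ M) = (g : X ⧸ M) ^ p := QuotientGroup.mk_pow (N := M) g p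
      rw [h2]; exact hpow _
    exact (QuotientGroup.eq_one_iff _).mp this

end Frattini

section FrattiniArg

variable {G : Type*} [Group G]

lemma frattini_arg {p : ℕ} (hp : p.Prime) (hpg : IsPGroup p G)
    {U N' : Subgroup G} (hN : N' ≤ phiP p G) (hU0 : U.index ≠ 0) (hUne : U ≠ ⊤) :
    U ⊔ N' ≠ ⊤ := by
  haveI : U.FiniteIndex := ⟨hU0⟩
  haveI : U.normalCore.FiniteIndex := Subgroup.finiteIndex_normalCore U
  set K := U.normalCore with hK
  haveI : Finite (G ⧸ K) := Nat.finite_of_card_ne_zero (by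
    rw [← Subgroup.index_eq_card]; exact Subgroup.FiniteIndex.index_ne_zero)
  have hPp : IsPGroup p (G ⧸ K) := hpg.to_quotient K
  set π := QuotientGroup.mk' K with hπ
  have hπs : Function.Surjective π := QuotientGroup.mk'_surjective K
  have hUbar : U.map π ≠ ⊤ := by
    intro h
    apply hUne
    have h1 : Subgroup.comap π (Subgroup.map π U) = U ⊔ π.ker := Subgroup.comap_map_eq π U
    rw [h, QuotientGroup.ker_mk'] at h1
    have h2 : U ⊔ K = U := sup_eq_left.mpr (Subgroup.normalCore_le U)
    rw [h2] at h1
    rw [← h1, Subgroup.comap_top]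
  obtain ⟨M, hM, hle⟩ :=
    (IsCoatomic.eq_top_or_exists_le_coatom (U.map π)).resolve_left hUbar
  intro htop
  have hphi : phiP p (G ⧸ K) ≤ M := phiP_le_coatom hp hPp hM
  have hmapN : N'.map π ≤ M := by
    refine le_trans ?_ hphi
    refine le_trans (Subgroup.map_mono hN) ?_
    exact map_phiP_le p π hπs
  have : (⊤ : Subgroup (G ⧸ K)) ≤ M := by
    rw [← Subgroup.map_top_of_surjective π hπs, ← htop, Subgroup.map_sup]
    exact sup_le hle hmapN
  exact hM.1 (top_le_iff.mp this)

end FrattiniArg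

section ProdSplit

variable (A B : Type*) [Group A] [Group B]

lemma range_inl_eq_ker_snd : (MonoidHom.inl A B).range = (MonoidHom.snd A B).ker := by
  rw [MonoidHom.ker_snd]
  ext ⟨a, b⟩
  simp [Subgroup.mem_prod, Prod.ext_iff, eq_comm]

lemma snd_surj : Function.Surjective (MonoidHom.snd A B) := fun b => ⟨(1, b), rfl⟩

variable {A B}

lemma index_comap_inl_mul (W : Subgroup (A × B)) :
    (W.comap (MonoidHom.inl A B)).index * (W.map (MonoidHom.snd A B)).index = W.index := by
  rw [Subgroup.index_comap, Subgroup.index_map,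
    MonoidHom.range_eq_top_of_surjective _ (snd_surj A B), Subgroup.index_top, mul_one,
    range_inl_eq_ker_snd, ← relindex_sup_normal W ((MonoidHom.snd A B).ker)]
  exact Subgroup.relIndex_mul_index le_sup_left

lemma ngen_prod_le (W : Subgroup (A × B))
    [Group.FG ↥(W.comap (MonoidHom.inl A B))] [Group.FG ↥(W.map (MonoidHom.snd A B))] :
    ngen ↥W ≤ ngen ↥(W.comap (MonoidHom.inl A B)) + ngen ↥(W.map (MonoidHom.snd A B)) := by
  set f := (MonoidHom.snd A B).subgroupMap W with hf
  have hfs : Function.Surjective f := (MonoidHom.snd A B).subgroupMap_surjective W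
  have hmem : ∀ a : ↥(W.comap (MonoidHom.inl A B)), ((a : A), (1 : B)) ∈ W := by
    intro a
    exact Subgroup.mem_comap.mp a.2
  set g : ↥(W.comap (MonoidHom.inl A B)) →* ↥W :=
    { toFun := fun a => ⟨((a : A), (1 : B)), hmem a⟩
      map_one' := rfl
      map_mul' := fun a b => by
        ext
        · rfl
        · exact (one_mul 1).symm } with hg
  have hr : g.range = f.ker := by
    ext w
    constructor
    · rintro ⟨a, rfl⟩
      have : f ⟨((a : A), (1 : B)), hmem a⟩ = 1 := by
        ext
        rfl
      exact this
    · intro hw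
      have hw2 : (w : A × B).2 = 1 := by
        have : (f w : B) = 1 := by rw [hw]; rfl
        exact this
      have hmem2 : ((w : A × B).1, (1 : B)) ∈ W := by
        have : ((w : A × B).1, (1 : B)) = (w : A × B) := by
          ext
          · rfl
          · exact hw2.symm
        rw [this]; exact w.2
      refine ⟨⟨(w : A × B).1, Subgroup.mem_comap.mpr ?_⟩, ?_⟩
      · exact hmem2
      · ext
        · rfl
        · exact hw2.symm
  exact ngen_le_of_exact f hfs g hr

end ProdSplit

section PiSucc

variable (G : Type*) [Group G]

def piSucc (k : ℕ) : (Fin (k + 1) → G) ≃* G × (Fin k → G) :=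
  { (Fin.consEquiv (fun _ : Fin (k + 1) => G)).symm with
    map_mul' := fun f g => rfl }

lemma fg_pi [Group.FG G] : ∀ k : ℕ, Group.FG (Fin k → G) := by
  intro k
  induction k with
  | zero =>
    haveI : Finite (Fin 0 → G) := by
      haveI : IsEmpty (Fin 0) := Fin.isEmpty'
      infer_instance
    infer_instance
  | succ k ih =>
    haveI := ih
    haveI := fg_prod G (Fin k → G)
    exact Group.fg_of_surjective (f := ((piSucc G k).symm : G × (Fin k → G) →* (Fin (k+1) → G)))
      (piSucc G k).symm.surjective

end PiSucc

section ProdBound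

lemma prod_bound {G : Type*} [Group G] [Group.FG G] {p : ℕ} (hp : p.Prime) (C g0 : ℕ) :
    ∀ k i : ℕ, (∀ i' : ℕ, i' ≤ i → ∀ U : Subgroup G, U.index = p ^ i' → ngen ↥U ≤ C * i' + g0) →
      ∀ W : Subgroup (Fin k → G), W.index = p ^ i → ngen ↥W ≤ C * i + k * g0 := by
  intro k
  induction k with
  | zero =>
    intro i _ W _
    haveI : IsEmpty (Fin 0) := Fin.isEmpty'
    have h : Subgroup.closure (((∅ : Finset ↥W)) : Set ↥W) = ⊤ := by
      rw [eq_top_iff]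
      intro x _
      have : x = 1 := Subsingleton.elim x 1
      rw [this]
      exact Subgroup.one_mem _
    have h2 := ngen_le h
    simp only [Finset.card_empty] at h2
    exact le_trans h2 (Nat.zero_le _)
  | succ k ih =>
    intro i hIH W hW
    set e := piSucc G k with he
    set W' := W.map e.toMonoidHom with hW'def
    have hng : ngen ↥W = ngen ↥W' := ngen_eq_of_mulEquiv (MulEquiv.subgroupMap e W)
    have hW' : W'.index = p ^ i := by
      rw [hW'def, Subgroup.index_map_of_injective _ e.injective,
        MonoidHom.range_eq_top_of_surjective _ e.surjective, Subgroup.index_top, mul_one, hW]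
    set A := W'.comap (MonoidHom.inl G (Fin k → G)) with hA_def
    set B := W'.map (MonoidHom.snd G (Fin k → G)) with hB_def
    have hmul : A.index * B.index = p ^ i := by
      rw [hA_def, hB_def, index_comap_inl_mul]; exact hW'
    obtain ⟨i₁, hi₁le, hAi⟩ := (Nat.dvd_prime_pow hp).mp (⟨B.index, hmul.symm⟩ : A.index ∣ p ^ i)
    obtain ⟨i₂, hi₂le, hBi⟩ := (Nat.dvd_prime_pow hp).mp
      (⟨A.index, by rw [← hmul, mul_comm]⟩ : B.index ∣ p ^ i)
    have hsum : i₁ + i₂ = i := by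
      have : p ^ (i₁ + i₂) = p ^ i := by rw [pow_add, ← hAi, ← hBi, hmul]
      exact Nat.pow_right_injective hp.two_le this
    haveI : A.FiniteIndex := ⟨by rw [hAi]; exact pow_ne_zero _ hp.pos.ne'⟩
    haveI : Group.FG ↥A := Subgroup.fg_of_index_ne_zero A
    haveI := fg_pi G k
    haveI : B.FiniteIndex := ⟨by rw [hBi]; exact pow_ne_zero _ hp.pos.ne'⟩
    haveI : Group.FG ↥B := Subgroup.fg_of_index_ne_zero B
    have h1 : ngen ↥A ≤ C * i₁ + g0 := hIH i₁ (by omega) A hAi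
    have h2 : ngen ↥B ≤ C * i₂ + k * g0 := ih i₂ (fun i' h U hU => hIH i' (by omega) U hU) B hBi
    have h3 : ngen ↥W' ≤ ngen ↥A + ngen ↥B := ngen_prod_le W'
    have hCi : C * i₁ + C * i₂ = C * i := by rw [← Nat.mul_add, hsum]
    have hkg : k * g0 + g0 = (k + 1) * g0 := by ring
    rw [hng]
    linarith

end ProdBound

theorem generators_bound_for_self_replicating
    (p : ℕ) (hp : p.Prime) (G : Type*) [Group G] [Group.FG G]
    (hpg : IsPGroup p G)
    (k ℓ : ℕ) (hk : 1 ≤ k) (hl : 1 ≤ ℓ)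
    (N : Subgroup G) [hN : N.Normal] (hNphi : N ≤ phiP p G)
    (hNidx : N.index = p ^ ℓ)
    (hNiso : Nonempty (N ≃* (Fin k → G)))
    (d : ℕ) (hd : d = sSup {n | ∃ H : Subgroup (G ⧸ N), n = ngen ↥H})
    (C : ℕ) (hC : C = (k - 1) * ngen G + d) :
    ∀ m : ℕ, ∀ U : Subgroup G, U.index = p ^ m →
      ngen ↥U ≤ C * m + ngen G := by
  obtain ⟨e⟩ := hNiso
  have hp0 : p ≠ 0 := hp.pos.ne'
  haveI : Finite (G ⧸ N) := Nat.finite_of_card_ne_zero (by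
    rw [← Subgroup.index_eq_card, hNidx]; exact pow_ne_zero _ hp0)
  intro m
  induction m using Nat.strong_induction_on with
  | _ m IH =>
    intro U hU
    by_cases hUtop : U = ⊤
    · subst hUtop
      have h := ngen_eq_of_mulEquiv (Subgroup.topEquiv (G := G))
      rw [h]
      exact Nat.le_add_left _ _
    · have hU0 : U.index ≠ 0 := by rw [hU]; exact pow_ne_zero _ hp0
      haveI : U.FiniteIndex := ⟨hU0⟩
      haveI : Group.FG ↥U := Subgroup.fg_of_index_ne_zero U
      have hm1 : 1 ≤ m := by
        by_contra h
        have hm0 : m = 0 := by omega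
        subst hm0
        exact hUtop (Subgroup.index_eq_one.mp (by rw [hU, pow_zero]))
      have hVne : U ⊔ N ≠ ⊤ := frattini_arg hp hpg hNphi hU0 hUtop
      have hVdvd : (U ⊔ N).index ∣ p ^ m := hU ▸ Subgroup.index_dvd_of_le le_sup_left
      obtain ⟨j, hjm, hVidx⟩ := (Nat.dvd_prime_pow hp).mp hVdvd
      have hj1 : 1 ≤ j := by
        by_contra h
        have hj0 : j = 0 := by omega
        subst hj0
        rw [pow_zero] at hVidx
        exact hVne (Subgroup.index_eq_one.mp hVidx)
      have hrel : U.relIndex N = p ^ (m - j) := by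
        have h1 : U.relIndex (U ⊔ N) * (U ⊔ N).index = U.index :=
          Subgroup.relIndex_mul_index le_sup_left
        have h2 : U.relIndex (U ⊔ N) = U.relIndex N := relindex_sup_normal U N
        rw [h2, hVidx, hU] at h1
        have h3 : p ^ (m - j) * p ^ j = p ^ m := by
          rw [← pow_add, Nat.sub_add_cancel hjm]
        have h4 : U.relIndex N * p ^ j = p ^ (m - j) * p ^ j := by rw [h1, h3]
        exact Nat.eq_of_mul_eq_mul_right (pow_pos hp.pos _) h4
      set F := (QuotientGroup.mk' N).comp U.subtype with hF
      set f := F.rangeRestrict with hf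
      have hfs : Function.Surjective f := F.rangeRestrict_surjective
      have hker : f.ker = N.subgroupOf U := by
        rw [hf, MonoidHom.ker_rangeRestrict]
        ext x
        simp [hF, MonoidHom.mem_ker, Subgroup.mem_subgroupOf, QuotientGroup.eq_one_iff]
      have hNrel0 : (N.subgroupOf U).index ≠ 0 := by
        have hrr : (N.subgroupOf U).index = N.relIndex U := rfl
        rw [hrr]
        intro h0
        have hdvd := Subgroup.relIndex_dvd_index_of_normal N U
        rw [h0, hNidx] at hdvd
        exact (pow_ne_zero ℓ hp0) (eq_zero_of_zero_dvd hdvd)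
      haveI : (N.subgroupOf U).FiniteIndex := ⟨hNrel0⟩
      haveI : Group.FG ↥(N.subgroupOf U) := Subgroup.fg_of_index_ne_zero _
      haveI : Finite ↥F.range := Subtype.finite
      haveI : Group.FG ↥F.range := Group.fg_of_finite
      have hexact : ngen ↥U ≤ ngen ↥(N.subgroupOf U) + ngen ↥F.range := by
        refine ngen_le_of_exact f hfs (N.subgroupOf U).subtype ?_
        rw [Subgroup.range_subtype, hker]
      have hdle : ngen ↥F.range ≤ d := by
        have hbdd : BddAbove {n | ∃ H : Subgroup (G ⧸ N), n = ngen ↥H} := by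
          refine ⟨Nat.card (G ⧸ N), ?_⟩
          rintro n ⟨H, rfl⟩
          calc ngen ↥H ≤ Nat.card ↥H := ngen_le_card ↥H
            _ ≤ Nat.card (G ⧸ N) := Nat.card_le_card_of_injective _ Subtype.coe_injective
        rw [hd]
        exact le_csSup hbdd ⟨F.range, rfl⟩
      have hiso1 : ngen ↥(N.subgroupOf U) = ngen ↥(U ⊓ N) := by
        rw [show N.subgroupOf U = (U ⊓ N).subgroupOf U by
          rw [show U ⊓ N = N ⊓ U from inf_comm U N, Subgroup.inf_subgroupOf_right]]
        exact ngen_eq_of_mulEquiv (Subgroup.subgroupOfEquivOfLe inf_le_left)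
      have hiso2 : ngen ↥(U.subgroupOf N) = ngen ↥(U ⊓ N) := by
        rw [show U.subgroupOf N = (U ⊓ N).subgroupOf N from (Subgroup.inf_subgroupOf_right U N).symm]
        exact ngen_eq_of_mulEquiv (Subgroup.subgroupOfEquivOfLe inf_le_right)
      set W1 := (U.subgroupOf N).map e.toMonoidHom with hW1
      have hngW : ngen ↥(U.subgroupOf N) = ngen ↥W1 :=
        ngen_eq_of_mulEquiv (MulEquiv.subgroupMap e (U.subgroupOf N))
      have hW1idx : W1.index = p ^ (m - j) := by
        rw [hW1, Subgroup.index_map_of_injective _ e.injective,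
          MonoidHom.range_eq_top_of_surjective _ e.surjective, Subgroup.index_top, mul_one]
        exact hrel
      have hprod : ngen ↥W1 ≤ C * (m - j) + k * ngen G := by
        refine prod_bound hp C (ngen G) k (m - j) ?_ W1 hW1idx
        intro i' hi' U' hU'
        exact IH i' (by omega) U' hU'
      have hfinal : ngen ↥U ≤ C * (m - j) + k * ngen G + d := by
        have h5 : ngen ↥(N.subgroupOf U) = ngen ↥W1 := by rw [hiso1, ← hiso2, hngW]
        rw [h5] at hexact
        linarith
      have hkg : (k - 1) * ngen G + ngen G = k * ngen G := by
        have hk1 : k - 1 + 1 = k := Nat.sub_add_cancel hk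
        calc (k - 1) * ngen G + ngen G = (k - 1 + 1) * ngen G := by ring
          _ = k * ngen G := by rw [hk1]
      have hCm : C * (m - j) + C * j = C * m := by
        rw [← Nat.mul_add, Nat.sub_add_cancel hjm]
      have hCj : C ≤ C * j := Nat.le_mul_of_pos_right C (by omega)
      linarith [hfinal, hkg, hCm, hCj, hC]
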